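/- Let R be an ℕ-graded k-algebra with graded automorphism τ. For any graded right R-module M, the twisted structure x ⋆ b = x·τ^m(b) (x ∈ M_m, b ∈ R) makes M into a graded right R^τ-module, and M ↦ M^τ gives an equivalence of categories between graded right R-modules and graded right R^τ-modules. -/

import Mathlib

/-- The multiplication of the Zhang twist `R^τ` (see `stmt_16`). -/
noncomputable def zhangMul {k R : Type*} [CommRing k] [Ring R] [Algebra k R]
    (𝒜 : ℕ → Submodule k R) [GradedAlgebra 𝒜] (τ : R ≃ₐ[k] R) (a b : R) : R :=
  DFinsupp.sumAddHom
    (fun m => (AddMonoidHom.mulRight ((τ ^ m : R ≃ₐ[k] R) b)).comp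
      ((𝒜 m).subtype.toAddMonoidHom))
    (DirectSum.decompose 𝒜 a)

/-- Let `R` be an ℕ-graded `k`-algebra with graded automorphism `τ`, and let `M`
be a graded right `R`-module (encoded as an `Rᵐᵒᵖ`-module with grading `ℳ`).  The
twisted action `x ⋆ b = x·τ^m(b)` for `x ∈ M_m` (encoded by a function `actM`
which is additive in `x` and is given by this formula on homogeneous `x`) makes
`M` into a graded right module over the Zhang twist `R^τ`, and `M ↦ M^τ` gives an
equivalence of categories of graded right modules: it is additive and unital,
compatible with `zhangMul`, preserves the grading; a degreewise `k`-linear map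
between two graded modules is `R`-linear iff it is `R^τ`-linear for the twisted
actions (full faithfulness); and twisting back by `τ⁻¹` recovers the original
action (essential surjectivity of the inverse twist). -/
theorem stmt_17 {k R M N : Type*} [CommRing k] [Ring R] [Algebra k R]
    (𝒜 : ℕ → Submodule k R) [GradedAlgebra 𝒜] (τ : R ≃ₐ[k] R)
    (hτ : ∀ n : ℕ, Submodule.map τ.toLinearMap (𝒜 n) = 𝒜 n)
    [AddCommGroup M] [Module k M] [Module Rᵐᵒᵖ M] [IsScalarTower k Rᵐᵒᵖ M]
    (ℳ : ℤ → Submodule k M) (hdecomp : DirectSum.IsInternal ℳ)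
    (hmod : ∀ (i : ℤ) (j : ℕ) (x : M) (a : R), x ∈ ℳ i → a ∈ 𝒜 j →
      (MulOpposite.op a) • x ∈ ℳ (i + j))
    (actM : M → R → M)
    (hactM : ∀ (m : ℤ) (x : M) (b : R), x ∈ ℳ m →
      actM x b = (MulOpposite.op ((τ ^ m : R ≃ₐ[k] R) b)) • x)
    (hactMadd : ∀ (x y : M) (b : R), actM (x + y) b = actM x b + actM y b)
    [AddCommGroup N] [Module k N] [Module Rᵐᵒᵖ N] [IsScalarTower k Rᵐᵒᵖ N]
    (𝒩 : ℤ → Submodule k N) (hdecompN : DirectSum.IsInternal 𝒩)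
    (hmodN : ∀ (i : ℤ) (j : ℕ) (x : N) (a : R), x ∈ 𝒩 i → a ∈ 𝒜 j →
      (MulOpposite.op a) • x ∈ 𝒩 (i + j))
    (actN : N → R → N)
    (hactN : ∀ (m : ℤ) (x : N) (b : R), x ∈ 𝒩 m →
      actN x b = (MulOpposite.op ((τ ^ m : R ≃ₐ[k] R) b)) • x)
    (hactNadd : ∀ (x y : N) (b : R), actN (x + y) b = actN x b + actN y b) :
    -- `M^τ` is a graded right `R^τ`-module:
    (∀ (x : M) (b b' : R), actM x (b + b') = actM x b + actM x b') ∧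
    (∀ x : M, actM x 1 = x) ∧
    (∀ (x : M) (a b : R), actM x (zhangMul 𝒜 τ a b) = actM (actM x a) b) ∧
    (∀ (i : ℤ) (j : ℕ) (x : M) (b : R), x ∈ ℳ i → b ∈ 𝒜 j →
      actM x b ∈ ℳ (i + j)) ∧
    -- full faithfulness of the twisting functor on graded homomorphisms:
    (∀ f : M →ₗ[k] N, (∀ i : ℤ, Submodule.map f (ℳ i) ≤ 𝒩 i) →
      ((∀ (x : M) (b : R), f ((MulOpposite.op b) • x) = (MulOpposite.op b) • f x) ↔
        (∀ (x : M) (b : R), f (actM x b) = actN (f x) b))) ∧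
    -- twisting `M^τ` back by `τ⁻¹` recovers the original action:
    (∀ (m : ℤ) (x : M) (b : R), x ∈ ℳ m →
      actM x (((τ ^ m : R ≃ₐ[k] R)⁻¹) b) = (MulOpposite.op b) • x) := by

  classical
  -- τ^m preserves degrees for all integers m
  have h1 : ∀ (n : ℕ) (a : R), a ∈ 𝒜 n → τ a ∈ 𝒜 n := fun n a ha =>
    (hτ n) ▸ ⟨a, ha, rfl⟩
  have h2 : ∀ (n : ℕ) (a : R), a ∈ 𝒜 n → τ⁻¹ a ∈ 𝒜 n := by
    intro n a ha
    rw [← hτ n] at ha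
    obtain ⟨b, hb, rfl⟩ := ha
    have hbb : τ⁻¹ (τ.toLinearMap b) = b := τ.symm_apply_apply b
    rw [hbb]; exact hb
  have hτ' : ∀ (m : ℤ) (n : ℕ) (a : R), a ∈ 𝒜 n → (τ ^ m : R ≃ₐ[k] R) a ∈ 𝒜 n := by
    intro m
    induction m using Int.induction_on with
    | zero => intro n a ha; simpa using ha
    | succ i ih =>
        intro n a ha
        have h : (τ ^ ((i : ℤ) + 1) : R ≃ₐ[k] R) a = (τ ^ (i : ℤ) : R ≃ₐ[k] R) (τ a) := by
          rw [zpow_add_one, AlgEquiv.mul_apply]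
        rw [h]; exact ih n _ (h1 n a ha)
    | pred i ih =>
        intro n a ha
        have h : (τ ^ (-(i : ℤ) - 1) : R ≃ₐ[k] R) a = (τ ^ (-(i : ℤ)) : R ≃ₐ[k] R) (τ⁻¹ a) := by
          rw [zpow_sub_one, AlgEquiv.mul_apply]
        rw [h]; exact ih n _ (h2 n a ha)
  -- induction principles from the decompositions
  have hindM : ∀ (P : M → Prop), (∀ i : ℤ, ∀ x ∈ ℳ i, P x) → P 0 →
      (∀ x y, P x → P y → P (x + y)) → ∀ x, P x := by
    intro P hhom h0 hadd x
    have hx : x ∈ ⨆ i, ℳ i := by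
      rw [hdecomp.submodule_iSup_eq_top]; trivial
    exact Submodule.iSup_induction (motive := P) ℳ hx hhom h0 hadd
  have hindR : ∀ (P : R → Prop), (∀ j : ℕ, ∀ a ∈ 𝒜 j, P a) → P 0 →
      (∀ a b, P a → P b → P (a + b)) → ∀ a, P a := by
    intro P hhom h0 hadd a
    have ha : a ∈ ⨆ j, 𝒜 j := by
      rw [(DirectSum.Decomposition.isInternal 𝒜).submodule_iSup_eq_top]; trivial
    exact Submodule.iSup_induction (motive := P) 𝒜 ha hhom h0 hadd
  have hM0 : ∀ b, actM 0 b = (0 : M) := fun b => by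
    rw [hactM 0 0 b (Submodule.zero_mem _), smul_zero]
  have hN0 : ∀ b, actN 0 b = (0 : N) := fun b => by
    rw [hactN 0 0 b (Submodule.zero_mem _), smul_zero]
  -- (1) additivity in the ring argument
  have part1 : ∀ (x : M) (b b' : R), actM x (b + b') = actM x b + actM x b' := by
    refine fun x => hindM (fun x => ∀ b b', actM x (b + b') = actM x b + actM x b')
      ?_ ?_ ?_ x
    · intro i x hx b b'
      rw [hactM i x _ hx, hactM i x _ hx, hactM i x _ hx, map_add,
        MulOpposite.op_add, add_smul]
    · intro b b'; simp [hM0]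
    · intro x y hx hy b b'
      rw [hactMadd, hactMadd, hactMadd, hx, hy]; abel
  have hMz : ∀ x : M, actM x 0 = 0 := by
    intro x
    have := part1 x 0 0
    rw [add_zero] at this
    exact (left_eq_add.mp this)
  -- (2) unitality
  have part2 : ∀ x : M, actM x 1 = x := by
    refine fun x => hindM (fun x => actM x 1 = x) ?_ (hM0 1) ?_ x
    · intro i x hx
      rw [hactM i x 1 hx, map_one, MulOpposite.op_one, one_smul]
    · intro x y hx hy; rw [hactMadd, hx, hy]
  -- zhangMul on homogeneous elements
  have hzh : ∀ (j : ℕ) (a : R), a ∈ 𝒜 j → ∀ b : R,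
      zhangMul 𝒜 τ a b = a * (τ ^ (j : ℤ) : R ≃ₐ[k] R) b := by
    intro j a ha b
    have hdef : zhangMul 𝒜 τ a b = DirectSum.toAddMonoid
        (fun m => (AddMonoidHom.mulRight ((τ ^ m : R ≃ₐ[k] R) b)).comp
          ((𝒜 m).subtype.toAddMonoidHom)) (DirectSum.decompose 𝒜 a) := rfl
    rw [hdef, DirectSum.decompose_of_mem 𝒜 ha, DirectSum.toAddMonoid_of]
    simp [zpow_natCast]
  have hzadd : ∀ (a a' b : R), zhangMul 𝒜 τ (a + a') b =
      zhangMul 𝒜 τ a b + zhangMul 𝒜 τ a' b := by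
    intro a a' b
    unfold zhangMul
    rw [DirectSum.decompose_add, map_add]
  have hzzero : ∀ b : R, zhangMul 𝒜 τ (0 : R) b = 0 := by
    intro b
    unfold zhangMul
    rw [DirectSum.decompose_zero, map_zero]
  -- (3) compatibility with zhangMul
  have part3 : ∀ (x : M) (a b : R), actM x (zhangMul 𝒜 τ a b) = actM (actM x a) b := by
    refine fun x => hindM
      (fun x => ∀ a b, actM x (zhangMul 𝒜 τ a b) = actM (actM x a) b) ?_ ?_ ?_ x
    · intro m x hx a b
      refine hindR (fun a => actM x (zhangMul 𝒜 τ a b) = actM (actM x a) b)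
        ?_ ?_ ?_ a
      · intro j a ha
        rw [hzh j a ha b, hactM m x _ hx, hactM m x a hx, map_mul,
          MulOpposite.op_mul, mul_smul,
          hactM (m + j) _ b (hmod m j x _ hx (hτ' m j a ha)),
          show ((m : ℤ) + (j : ℕ)) = m + (j : ℤ) from rfl, zpow_add,
          AlgEquiv.mul_apply]
      · rw [hzzero, hMz, hM0]
      · intro a a' haa haa'
        rw [hzadd, part1, haa, haa', part1, hactMadd]
    · intro a b; rw [hM0, hM0, hM0]
    · intro x y hx hy a b
      rw [hactMadd, hactMadd, hx, hy, hactMadd]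
  -- (4) grading
  have part4 : ∀ (i : ℤ) (j : ℕ) (x : M) (b : R), x ∈ ℳ i → b ∈ 𝒜 j →
      actM x b ∈ ℳ (i + j) := by
    intro i j x b hx hb
    rw [hactM i x b hx]
    exact hmod i j x _ hx (hτ' i j b hb)
  -- (6) twisting back; also needed for (5)
  have hinv : ∀ (m : ℤ) (b : R), (τ ^ m : R ≃ₐ[k] R) (((τ ^ m : R ≃ₐ[k] R)⁻¹) b) = b := by
    intro m b
    rw [← AlgEquiv.mul_apply, mul_inv_cancel, AlgEquiv.one_apply]
  have part6 : ∀ (m : ℤ) (x : M) (b : R), x ∈ ℳ m →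
      actM x (((τ ^ m : R ≃ₐ[k] R)⁻¹) b) = (MulOpposite.op b) • x := by
    intro m x b hx
    rw [hactM m x _ hx, hinv]
  -- (5) full faithfulness
  have part5 : ∀ f : M →ₗ[k] N, (∀ i : ℤ, Submodule.map f (ℳ i) ≤ 𝒩 i) →
      ((∀ (x : M) (b : R), f ((MulOpposite.op b) • x) = (MulOpposite.op b) • f x) ↔
        (∀ (x : M) (b : R), f (actM x b) = actN (f x) b)) := by
    intro f hf
    have hfm : ∀ (i : ℤ) (x : M), x ∈ ℳ i → f x ∈ 𝒩 i := fun i x hx =>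
      hf i ⟨x, hx, rfl⟩
    constructor
    · intro hlin
      refine fun x => hindM (fun x => ∀ b, f (actM x b) = actN (f x) b) ?_ ?_ ?_ x
      · intro i x hx b
        rw [hactM i x b hx, hlin, hactN i (f x) b (hfm i x hx)]
      · intro b; rw [hM0, map_zero, hN0]
      · intro x y hx hy b
        rw [hactMadd, map_add, map_add, hactNadd, hx, hy]
    · intro htw
      refine fun x => hindM
        (fun x => ∀ b, f ((MulOpposite.op b) • x) = (MulOpposite.op b) • f x) ?_ ?_ ?_ x
      · intro i x hx b
        rw [← part6 i x b hx, htw, hactN i (f x) _ (hfm i x hx), hinv]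
      · intro b; rw [smul_zero, map_zero, smul_zero]
      · intro x y hx hy b
        rw [smul_add, map_add, map_add, hx, hy, smul_add]
  exact ⟨part1, part2, part3, part4, part5, part6⟩
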